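/- Let a > a' ≥ 0 be rationals with ⌊a⌋ ≥ ⌈a'⌉. Then the shortest 1-path from a to a' is obtained by concatenating: the shortest 1-path P from a to ⌊a⌋, the integer path Q: ⌊a⌋ > ⌊a⌋−1 > ⋯ > ⌈a'⌉, and the shortest 1-path R from ⌈a'⌉ to a'. -/

import Mathlib

/-- An `N`-path is a strictly decreasing sequence of rationals (automatically
in lowest terms, as elements of `ℚ`) such that consecutive entries `x > y`
satisfy `x − y = N / (lcm(N, x.den) · lcm(N, y.den))`. -/
def IsNPath (N : ℕ) (l : List ℚ) : Prop :=
  l.Chain' fun x y => y < x ∧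
    x - y = (N : ℚ) / ((Nat.lcm N x.den : ℚ) * (Nat.lcm N y.den : ℚ))

/-- An `N`-path from `a` to `a'`: an `N`-path whose first entry is `a` and
whose last entry is `a'`. -/
def IsNPathFrom (N : ℕ) (a a' : ℚ) (l : List ℚ) : Prop :=
  IsNPath N l ∧ l.head? = some a ∧ l.getLast? = some a'

lemma no_int_between {x y : ℚ}
    (hlt : y < x)
    (heq : x - y = ((1:ℕ) : ℚ) / ((Nat.lcm 1 x.den : ℚ) * (Nat.lcm 1 y.den : ℚ)))
    {n : ℤ} (h1 : y < (n:ℚ)) (h2 : (n:ℚ) < x) : False := by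
  rw [Nat.lcm_one_left, Nat.lcm_one_left, Nat.cast_one] at heq
  have hdx : (0:ℚ) < (x.den : ℚ) := by exact_mod_cast x.pos
  have hdy : (0:ℚ) < (y.den : ℚ) := by exact_mod_cast y.pos
  have hxd : x * (x.den : ℚ) = (x.num : ℚ) := by exact_mod_cast Rat.mul_den_eq_num x
  have hyd : y * (y.den : ℚ) = (y.num : ℚ) := by exact_mod_cast Rat.mul_den_eq_num y
  have hxn : (1:ℚ) ≤ (x - n) * x.den := by
    have h2a : (n:ℚ) * x.den < x * x.den := by
      exact mul_lt_mul_of_pos_right h2 hdx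
    rw [hxd] at h2a
    have h2' : (n : ℚ) * (x.den : ℚ) < ((x.num : ℚ)) := h2a
    have h2'' : n * (x.den : ℤ) < x.num := by exact_mod_cast h2'
    have h2''' : n * (x.den : ℤ) + 1 ≤ x.num := h2''
    have : (n:ℚ) * x.den + 1 ≤ (x.num : ℚ) := by exact_mod_cast h2'''
    nlinarith
  have hny : (1:ℚ) ≤ ((n:ℚ) - y) * y.den := by
    have h1a : y * y.den < (n:ℚ) * y.den := mul_lt_mul_of_pos_right h1 hdy
    rw [hyd] at h1a
    have h1'' : y.num < n * (y.den : ℤ) := by exact_mod_cast h1a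
    have h1''' : y.num + 1 ≤ n * (y.den : ℤ) := h1''
    have : (y.num : ℚ) + 1 ≤ (n:ℚ) * y.den := by exact_mod_cast h1'''
    nlinarith
  have hmul : (x - y) * ((x.den : ℚ) * (y.den : ℚ)) = 1 := by
    rw [heq]; field_simp
  have h1dx : (1:ℚ) ≤ (x.den : ℚ) := by exact_mod_cast x.pos
  have h1dy : (1:ℚ) ≤ (y.den : ℚ) := by exact_mod_cast y.pos
  nlinarith [mul_le_mul_of_nonneg_right hxn (le_of_lt hdy),
             mul_le_mul_of_nonneg_right hny (le_of_lt hdx)]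

lemma int_mem_npath :
    ∀ (l : List ℚ) (a a' : ℚ), IsNPath 1 l → l.head? = some a →
      l.getLast? = some a' → ∀ n : ℤ, a' ≤ (n:ℚ) → (n:ℚ) ≤ a → (n:ℚ) ∈ l := by
  intro l
  induction l with
  | nil => intro a a' _ ha; simp at ha
  | cons x t ih =>
    intro a a' hpath ha ha' n hn1 hn2
    obtain rfl : x = a := by simpa using ha
    cases t with
    | nil =>
      have he : a' = x := by simpa using ha'.symm
      have : (n:ℚ) = x := le_antisymm hn2 (he ▸ hn1)
      simp [this]
    | cons y t' =>
      by_cases hnx : (n:ℚ) = x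
      · simp [hnx]
      · have hnlt : (n:ℚ) < x := lt_of_le_of_ne hn2 hnx
        have hstep := (List.isChain_cons_cons.mp hpath).1
        have htail : IsNPath 1 (y :: t') := (List.isChain_cons_cons.mp hpath).2
        have hny : (n:ℚ) ≤ y := by
          by_contra hcon
          push_neg at hcon
          exact no_int_between hstep.1 hstep.2 hcon hnlt
        have ha'' : (y :: t').getLast? = some a' := by simpa using ha'
        exact List.mem_cons_of_mem _ (ih y a' htail rfl ha'' n hn1 hny)

lemma npath_glue {N : ℕ} {a b c : ℚ} {l₁ l₂ : List ℚ}
    (h1 : IsNPathFrom N a b l₁) (h2 : IsNPathFrom N b c l₂) :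
    IsNPathFrom N a c (l₁ ++ l₂.tail) := by
  obtain ⟨hc1, hh1, hl1⟩ := h1
  obtain ⟨hc2, hh2, hl2⟩ := h2
  cases l₂ with
  | nil => simp at hh2
  | cons b' t =>
    have hb : b' = b := by simpa using hh2
    have hne1 : l₁ ≠ [] := by rintro rfl; simp at hl1
    constructor
    · refine List.isChain_append.mpr ⟨hc1, (List.isChain_cons.mp hc2).2, ?_⟩
      intro u hu v hv
      have hub : u = b := by rw [hl1] at hu; exact (by simpa using hu : b = u).symm
      have := (List.isChain_cons.mp hc2).1 v hv
      rwa [hub, ← hb]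
    constructor
    · rw [List.head?_append_of_ne_nil _ hne1]; exact hh1
    · show (l₁ ++ t).getLast? = some c
      cases t with
      | nil =>
        have : c = b' := by simpa using hl2.symm
        rw [this, hb]; simpa using hl1
      | cons z t' =>
        rw [List.getLast?_append_of_ne_nil _ (by simp)]
        simpa using hl2

lemma pw_getLast_le :
    ∀ {l : List ℚ} {m : ℚ}, l.Pairwise (fun u v => v < u) → l.getLast? = some m →
      ∀ x ∈ l, m ≤ x := by
  intro l
  induction l with
  | nil => intro m _ hm; simp at hm
  | cons u t ih =>
    intro m hpw hm x hx
    cases t with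
    | nil =>
      have : m = u := by simpa using hm.symm
      subst this
      simp at hx; simp [hx]
    | cons v t' =>
      have hm' : (v :: t').getLast? = some m := by simpa using hm
      rcases List.mem_cons.mp hx with rfl | hx'
      · have hmm : m ∈ v :: t' := by
          obtain ⟨hne, rfl⟩ := List.mem_getLast?_eq_getLast (l := v :: t') (x := m) hm'
          exact List.getLast_mem hne
        exact le_of_lt ((List.pairwise_cons.mp hpw).1 m hmm)
      · exact ih (List.pairwise_cons.mp hpw).2 hm' x hx'

lemma pw_head_ge {l : List ℚ} {m : ℚ} (hpw : l.Pairwise (fun u v => v < u))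
    (hm : l.head? = some m) : ∀ x ∈ l, x ≤ m := by
  cases l with
  | nil => simp at hm
  | cons u t =>
    obtain rfl : u = m := by simpa using hm
    intro x hx
    rcases List.mem_cons.mp hx with rfl | hx'
    · exact le_refl x
    · exact le_of_lt ((List.pairwise_cons.mp hpw).1 x hx')

lemma npath_pairwise {N : ℕ} {l : List ℚ} (h : IsNPath N l) :
    l.Pairwise (fun u v => v < u) := by
  have : l.Chain' (fun u v : ℚ => v < u) := h.imp (fun a b hab => hab.1)
  exact List.isChain_iff_pairwise.mp this

/-- A shortest `N`-path from `a` to `a'`: an `N`-path from `a` to `a'` such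
that no proper subsequence (containing the endpoints) is an `N`-path from `a`
to `a'`. -/
def IsShortestNPath (N : ℕ) (a a' : ℚ) (l : List ℚ) : Prop :=
  IsNPathFrom N a a' l ∧
    ∀ l' : List ℚ, l'.Sublist l → l' ≠ l → ¬ IsNPathFrom N a a' l'

/-- Let `a > a' ≥ 0` be rationals with `⌊a⌋ ≥ ⌈a'⌉`.  Then
the shortest `1`-path from `a` to `a'` is obtained by concatenating: the
shortest `1`-path `P` from `a` to `⌊a⌋`, the integer path
`Q : ⌊a⌋ > ⌊a⌋ − 1 > ⋯ > ⌈a'⌉`, and the shortest `1`-path `R` from `⌈a'⌉` to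
`a'` (dropping the repeated entries `⌊a⌋` and `⌈a'⌉` at the junctions). -/
theorem stmt16 (a a' : ℚ) (h : a' < a) (h0 : 0 ≤ a') (hfc : ⌈a'⌉ ≤ ⌊a⌋)
    (P Q R : List ℚ)
    (hP : IsShortestNPath 1 a ((⌊a⌋ : ℤ) : ℚ) P)
    (hQ : Q = (List.range ((⌊a⌋ - ⌈a'⌉).toNat + 1)).map
      (fun j : ℕ => ((⌊a⌋ - (j : ℤ) : ℤ) : ℚ)))
    (hR : IsShortestNPath 1 ((⌈a'⌉ : ℤ) : ℚ) a' R) :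
    IsShortestNPath 1 a a' (P ++ Q.tail ++ R.tail) := by
  obtain ⟨hPfrom, hPmin⟩ := hP
  obtain ⟨hRfrom, hRmin⟩ := hR
  set F : ℚ := ((⌊a⌋ : ℤ) : ℚ) with hFdef
  set C : ℚ := ((⌈a'⌉ : ℤ) : ℚ) with hCdef
  set k : ℕ := (⌊a⌋ - ⌈a'⌉).toNat with hkdef
  have hkk : (k : ℤ) = ⌊a⌋ - ⌈a'⌉ := Int.toNat_of_nonneg (by omega)
  have haF : F ≤ a := Int.floor_le a
  have hCa' : a' ≤ C := Int.le_ceil a'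
  have hCF : C ≤ F := by rw [hFdef, hCdef]; exact_mod_cast hfc
  -- Q is a 1-path from F to C
  have hQfrom : IsNPathFrom 1 F C Q := by
    refine ⟨?_, ?_, ?_⟩
    · unfold IsNPath List.Chain'
      rw [hQ, List.isChain_map, List.isChain_range_succ]
      intro m hm
      constructor
      · push_cast; linarith
      · simp only [Rat.den_intCast, Nat.lcm_one_left, Nat.cast_one]
        push_cast; ring
    · rw [hQ, List.head?_map, List.range_succ_eq_map]
      simp [hFdef]
    · rw [hQ, List.range_succ, List.map_append]
      simp only [List.map_cons, List.map_nil, List.getLast?_concat, Option.some.injEq]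
      have hck : (⌊a⌋ : ℤ) - (k : ℤ) = ⌈a'⌉ := by omega
      rw [hck, hCdef]
  have hQmem : ∀ x ∈ Q, ∃ j : ℕ, j ≤ k ∧ x = ((⌊a⌋ - (j : ℤ) : ℤ) : ℚ) := by
    rw [hQ]
    intro x hx
    simp only [List.mem_map, List.mem_range] at hx
    obtain ⟨j, hj, rfl⟩ := hx
    exact ⟨j, by omega, rfl⟩
  have h1 : IsNPathFrom 1 a C (P ++ Q.tail) := npath_glue hPfrom hQfrom
  have hLfrom : IsNPathFrom 1 a a' (P ++ Q.tail ++ R.tail) := npath_glue h1 hRfrom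
  refine ⟨hLfrom, ?_⟩
  intro l' hsub hne hl'
  obtain ⟨hl'path, hl'h, hl'l⟩ := hl'
  have hl'pw := npath_pairwise hl'path
  have hLpw := npath_pairwise hLfrom.1
  have hPpw := npath_pairwise hPfrom.1
  have hQpw := npath_pairwise hQfrom.1
  have hRpw := npath_pairwise hRfrom.1
  -- decompose Q and R by their heads
  obtain ⟨qt, hQeq⟩ : ∃ qt, Q = F :: qt := by
    cases hQC : Q with
    | nil => rw [hQC] at hQfrom; simp [IsNPathFrom] at hQfrom
    | cons q0 t =>
      have : q0 = F := by
        have := hQfrom.2.1; rw [hQC] at this; simpa using this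
      exact ⟨t, by rw [this]⟩
  obtain ⟨rt, hReq⟩ : ∃ rt, R = C :: rt := by
    cases hRC : R with
    | nil => rw [hRC] at hRfrom; simp [IsNPathFrom] at hRfrom
    | cons r0 t =>
      have : r0 = C := by
        have := hRfrom.2.1; rw [hRC] at this; simpa using this
      exact ⟨t, by rw [this]⟩
  have hQtail_lt : ∀ x ∈ Q.tail, x < F := by
    rw [hQeq]
    intro x hx
    have := hQpw; rw [hQeq] at this
    exact (List.pairwise_cons.mp this).1 x hx
  have hRtail_lt : ∀ x ∈ R.tail, x < C := by
    rw [hReq]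
    intro x hx
    have := hRpw; rw [hReq] at this
    exact (List.pairwise_cons.mp this).1 x hx
  have hP_ge : ∀ x ∈ P, F ≤ x := pw_getLast_le hPpw hPfrom.2.2
  have hQ_ge : ∀ x ∈ Q, C ≤ x := pw_getLast_le hQpw hQfrom.2.2
  -- all integers in [⌈a'⌉, ⌊a⌋] belong to l'
  have hmemB : ∀ n : ℤ, a' ≤ (n:ℚ) → (n:ℚ) ≤ a → (n:ℚ) ∈ l' :=
    int_mem_npath l' a a' hl'path hl'h hl'l
  have hFmem : F ∈ l' := hmemB ⌊a⌋ (le_trans hCa' hCF) haF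
  have hCmem : C ∈ l' := hmemB ⌈a'⌉ hCa' (le_trans hCF haF)
  -- upper part of l' equals P
  obtain ⟨u, v, huv⟩ := List.append_of_mem hFmem
  have hu_gt : ∀ x ∈ u, F < x := by
    intro x hx
    have hpw := hl'pw; rw [huv] at hpw
    exact (List.pairwise_append.mp hpw).2.2 x hx F (by simp)
  have hTpre : (u ++ [F]) ++ v = l' := by rw [huv]; simp
  have hTchain : IsNPath 1 (u ++ [F]) := by
    have := hl'path; rw [← hTpre] at this
    exact (List.isChain_append.mp this).1
  have hThead : (u ++ [F]).head? = some a := by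
    have hh := hl'h; rw [huv] at hh
    cases u with
    | nil => simpa using hh
    | cons w u' => simpa using hh
  have hTfrom : IsNPathFrom 1 a F (u ++ [F]) :=
    ⟨hTchain, hThead, by simp⟩
  have hTsubL : (u ++ [F]).Sublist (P ++ (Q.tail ++ R.tail)) := by
    rw [← List.append_assoc]
    exact (List.IsPrefix.sublist ⟨v, hTpre⟩).trans hsub
  obtain ⟨T₁, T₂, hT12, hT1, hT2⟩ := List.sublist_append_iff.mp hTsubL
  have hT2nil : T₂ = [] := by
    rw [List.eq_nil_iff_forall_not_mem]
    intro x hx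
    have hxT : x ∈ u ++ [F] := by rw [hT12]; exact List.mem_append_right _ hx
    have hxge : F ≤ x := by
      rcases List.mem_append.mp hxT with h' | h'
      · exact le_of_lt (hu_gt x h')
      · simp at h'; simp [h']
    have hxlt : x < F := by
      rcases List.mem_append.mp (hT2.subset hx) with h' | h'
      · exact hQtail_lt x h'
      · exact lt_of_lt_of_le (hRtail_lt x h') hCF
    exact absurd hxlt (not_lt.mpr hxge)
  have hTP : (u ++ [F]).Sublist P := by
    rw [hT2nil, List.append_nil] at hT12; rw [hT12]; exact hT1
  have hTeqP : u ++ [F] = P := by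
    by_contra hne'
    exact hPmin _ hTP hne' hTfrom
  have hPsub : ∀ x ∈ P, x ∈ l' := by
    rw [← hTeqP, huv]
    intro x hx
    rcases List.mem_append.mp hx with h' | h'
    · exact List.mem_append_left _ h'
    · simp at h'; simp [h']
  -- lower part of l' equals R
  obtain ⟨u', v', huv'⟩ := List.append_of_mem hCmem
  have hSchain : IsNPath 1 (C :: v') := by
    have := hl'path; rw [huv'] at this
    exact (List.isChain_append.mp this).2.1
  have hSpw := npath_pairwise hSchain
  have hSlast : (C :: v').getLast? = some a' := by
    have := hl'l; rw [huv', List.getLast?_append_of_ne_nil _ (by simp)] at this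
    exact this
  have hSfrom : IsNPathFrom 1 C a' (C :: v') := ⟨hSchain, by simp, hSlast⟩
  have hSsub : (C :: v').Sublist ((P ++ Q.tail) ++ R.tail) := by
    have hsfx : (C :: v').Sublist l' := List.IsSuffix.sublist ⟨u', huv'.symm⟩
    exact hsfx.trans hsub
  obtain ⟨S₁, S₂, hS12, hS1, hS2⟩ := List.sublist_append_iff.mp hSsub
  have hS1all : ∀ x ∈ S₁, x = C := by
    intro x hx
    have hxS : x ∈ C :: v' := by rw [hS12]; exact List.mem_append_left _ hx
    have hxle : x ≤ C := pw_head_ge hSpw rfl x hxS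
    have hxge : C ≤ x := by
      rcases List.mem_append.mp (hS1.subset hx) with h' | h'
      · exact le_trans hCF (hP_ge x h')
      · exact hQ_ge x (List.mem_of_mem_tail h')
    exact le_antisymm hxle hxge
  have hS1' : S₁ = [] ∨ S₁ = [C] := by
    cases hS1c : S₁ with
    | nil => exact Or.inl rfl
    | cons w t =>
      cases t with
      | nil =>
        have hw : w = C := hS1all w (by rw [hS1c]; simp)
        right; rw [hw]
      | cons w2 t2 =>
        exfalso
        have hw : w = C := hS1all w (by rw [hS1c]; simp)
        have hw2 : w2 = C := hS1all w2 (by rw [hS1c]; simp)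
        have hpw := hSpw; rw [hS12, hS1c] at hpw
        have := (List.pairwise_append.mp hpw).1
        have hlt : w2 < w := (List.pairwise_cons.mp this).1 w2 (by simp)
        rw [hw, hw2] at hlt
        exact lt_irrefl _ hlt
  have hSR : (C :: v').Sublist R := by
    rcases hS1' with h' | h'
    · rw [h', List.nil_append] at hS12
      rw [hS12]
      exact hS2.trans (List.tail_sublist R)
    · rw [h'] at hS12
      have hv' : v' = S₂ := by simpa using hS12
      rw [hv', hReq]
      have : R.tail = rt := by rw [hReq]; rfl
      rw [this] at hS2
      exact hS2.cons₂ C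
  have hSeqR : C :: v' = R := by
    by_contra hne'
    exact hRmin _ hSR hne' hSfrom
  have hRsub : ∀ x ∈ R, x ∈ l' := by
    rw [← hSeqR, huv']
    intro x hx
    exact List.mem_append_right _ hx
  -- Q members are in l'
  have hQsub : ∀ x ∈ Q, x ∈ l' := by
    intro x hx
    obtain ⟨j, hj, rfl⟩ := hQmem x hx
    apply hmemB
    · have hle : (⌈a'⌉ : ℤ) ≤ ⌊a⌋ - (j : ℤ) := by omega
      calc a' ≤ C := hCa'
        _ ≤ _ := by rw [hCdef]; exact_mod_cast hle
    · have hle : (⌊a⌋ : ℤ) - (j : ℤ) ≤ ⌊a⌋ := by omega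
      calc ((⌊a⌋ - (j : ℤ) : ℤ) : ℚ) ≤ F := by rw [hFdef]; exact_mod_cast hle
        _ ≤ a := haF
  -- conclude
  have hLsub : (P ++ Q.tail ++ R.tail) ⊆ l' := by
    intro x hx
    rcases List.mem_append.mp hx with hx' | hx'
    · rcases List.mem_append.mp hx' with hx'' | hx''
      · exact hPsub x hx''
      · exact hQsub x (List.mem_of_mem_tail hx'')
    · exact hRsub x ((List.tail_sublist R).subset hx')
  have hLnd : (P ++ Q.tail ++ R.tail).Nodup :=
    hLpw.imp (fun hlt => (ne_of_gt hlt))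
  have hlen : (P ++ Q.tail ++ R.tail).length ≤ l'.length :=
    (hLnd.subperm hLsub).length_le
  exact hne (hsub.eq_of_length (le_antisymm hsub.length_le hlen))
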